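/- Let W, W̃ ∈ ℝ^{n×n} be (possibly asymmetric) matrices and ε ≥ 0. Then W̃ is a directed ε-approximation of W (i.e., for all x, y ∈ ℝ^n, |x^⊤(W − W̃)y| ≤ (ε/2)·(‖x‖² + ‖y‖² − x^⊤U_W x − y^⊤U_W y)) if and only if W̃ is a complex ε-approximation of W (i.e., for all x, y ∈ ℂ^n, |x*(W − W̃)y| ≤ (ε/2)·(‖x‖² + ‖y‖² − Re(x*Wx + y*Wy))). -/

import Mathlib

open Matrix

noncomputable section

/-- The symmetrization `U_A = (A + Aᵀ)/2` of a real square matrix. -/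
def rsym {m : Type*} [Fintype m] (A : Matrix m m ℝ) : Matrix m m ℝ :=
  (1 / 2 : ℝ) • (A + Aᵀ)

/-- `W̃` is a *directed ε-approximation* of `W`:
for all real `x, y`, `|xᵀ(W − W̃)y| ≤ (ε/2)(‖x‖² + ‖y‖² − xᵀU_W x − yᵀU_W y)`. -/
def DirApprox {m : Type*} [Fintype m] (ε : ℝ) (W Wt : Matrix m m ℝ) : Prop :=
  ∀ x y : m → ℝ,
    |x ⬝ᵥ ((W - Wt) *ᵥ y)| ≤
      ε / 2 * (x ⬝ᵥ x + y ⬝ᵥ y - x ⬝ᵥ (rsym W *ᵥ x) - y ⬝ᵥ (rsym W *ᵥ y))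

/-- The sesquilinear form `x* A y`. -/
def sesq {m : Type*} [Fintype m] (A : Matrix m m ℂ) (x y : m → ℂ) : ℂ :=
  star x ⬝ᵥ (A *ᵥ y)

/-- The squared Euclidean norm of a complex vector. -/
def vnormSq {m : Type*} [Fintype m] (x : m → ℂ) : ℝ :=
  ∑ i, Complex.normSq (x i)

/-- `W̃` is a *complex ε-approximation* of `W`:
for all complex `x, y`, `|x*(W − W̃)y| ≤ (ε/2)(‖x‖² + ‖y‖² − Re(x*Wx + y*Wy))`. -/
def ComplexApprox {m : Type*} [Fintype m] (ε : ℝ) (W Wt : Matrix m m ℂ) : Prop :=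
  ∀ x y : m → ℂ,
    ‖sesq (W - Wt) x y‖ ≤
      ε / 2 * (vnormSq x + vnormSq y - (sesq W x x + sesq W y y).re)

lemma dot_transpose {m : Type*} [Fintype m] (W : Matrix m m ℝ) (v : m → ℝ) :
    v ⬝ᵥ (Wᵀ *ᵥ v) = v ⬝ᵥ (W *ᵥ v) := by
  simp only [dotProduct, mulVec, Matrix.transpose_apply, Finset.mul_sum]
  rw [Finset.sum_comm]
  exact Finset.sum_congr rfl fun i _ => Finset.sum_congr rfl fun j _ => by ring

lemma dot_rsym {m : Type*} [Fintype m] (W : Matrix m m ℝ) (v : m → ℝ) :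
    v ⬝ᵥ (rsym W *ᵥ v) = v ⬝ᵥ (W *ᵥ v) := by
  have h := dot_transpose W v
  simp only [rsym, Matrix.smul_mulVec, Matrix.add_mulVec, dotProduct_smul,
    dotProduct_add, smul_eq_mul]
  linarith

lemma sesq_re {m : Type*} [Fintype m] (M : Matrix m m ℝ) (x y : m → ℂ) :
    (sesq (M.map Complex.ofReal) x y).re =
      (fun i => (x i).re) ⬝ᵥ (M *ᵥ fun i => (y i).re) +
      (fun i => (x i).im) ⬝ᵥ (M *ᵥ fun i => (y i).im) := by
  simp only [sesq, dotProduct, mulVec, Matrix.map_apply, Pi.star_apply, Complex.re_sum,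
    Complex.mul_re, Complex.star_def, Complex.conj_re, Complex.conj_im,
    Complex.im_sum, Complex.re_ofReal_mul, Complex.im_ofReal_mul, Complex.ofReal_re, Complex.ofReal_im]
  rw [← Finset.sum_add_distrib]
  exact Finset.sum_congr rfl fun i _ => by
    simp only [Finset.mul_sum]
    rw [← Finset.sum_sub_distrib, ← Finset.sum_add_distrib]
    exact Finset.sum_congr rfl fun j _ => by ring

lemma vnormSq_eq {m : Type*} [Fintype m] (x : m → ℂ) :
    vnormSq x = (fun i => (x i).re) ⬝ᵥ (fun i => (x i).re) +
      (fun i => (x i).im) ⬝ᵥ (fun i => (x i).im) := by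
  simp [vnormSq, Complex.normSq_apply, dotProduct, Finset.sum_add_distrib]

lemma sesq_ofReal {m : Type*} [Fintype m] (M : Matrix m m ℝ) (x y : m → ℝ) :
    sesq (M.map Complex.ofReal) (fun i => (x i : ℂ)) (fun i => (y i : ℂ)) =
      ((x ⬝ᵥ (M *ᵥ y) : ℝ) : ℂ) := by
  simp only [sesq, dotProduct, mulVec, Matrix.map_apply, Pi.star_apply]
  push_cast
  simp

lemma sesq_smul {m : Type*} [Fintype m] (A : Matrix m m ℂ) (c : ℂ) (x : m → ℂ)
    (hc : ‖c‖ = 1) :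
    sesq A ((starRingEnd ℂ) c • x) ((starRingEnd ℂ) c • x) = sesq A x x := by
  have hcc : c * (starRingEnd ℂ) c = 1 := by
    rw [Complex.mul_conj]
    norm_cast
    rw [Complex.normSq_eq_norm_sq, hc]; norm_num
  simp only [sesq, star_smul, RCLike.star_def, Complex.conj_conj, mulVec_smul,
    smul_dotProduct, dotProduct_smul, smul_eq_mul]
  rw [← mul_assoc, mul_comm ((starRingEnd ℂ) c) c, hcc, one_mul]

lemma vnormSq_smul {m : Type*} [Fintype m] (c : ℂ) (x : m → ℂ)
    (hc : ‖c‖ = 1) :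
    vnormSq ((starRingEnd ℂ) c • x) = vnormSq x := by
  simp [vnormSq, Complex.normSq_mul, Complex.normSq_conj, Complex.normSq_eq_norm_sq, hc]

lemma sesq_smul_left {m : Type*} [Fintype m] (A : Matrix m m ℂ) (c : ℂ) (x y : m → ℂ) :
    sesq A ((starRingEnd ℂ) c • x) y = c * sesq A x y := by
  simp only [sesq, star_smul, RCLike.star_def, Complex.conj_conj, smul_dotProduct,
    smul_eq_mul]

/-- For real matrices `W, W̃` and `ε ≥ 0`, `W̃` is a directed
ε-approximation of `W` iff `W̃` (viewed as a complex matrix) is a complex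
ε-approximation of `W`. -/
theorem directed_iff_complex_approx {n : ℕ} (ε : ℝ) (hε : 0 ≤ ε)
    (W Wt : Matrix (Fin n) (Fin n) ℝ) :
    DirApprox ε W Wt ↔
      ComplexApprox ε (W.map Complex.ofReal) (Wt.map Complex.ofReal) := by
  have hmap : (W.map Complex.ofReal) - (Wt.map Complex.ofReal)
      = (W - Wt).map Complex.ofReal := by
    ext i j; simp
  constructor
  · intro h x y
    rw [hmap]
    set M := W - Wt with hM
    set z := sesq (M.map Complex.ofReal) x y with hzdef
    obtain ⟨c0, hc0, hc0z⟩ : ∃ c0 : ℂ, ‖c0‖ = 1 ∧ c0 * z = (‖z‖ : ℂ) := by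
      rcases eq_or_ne z 0 with h0 | h0
      · exact ⟨1, by simp, by simp [h0]⟩
      · refine ⟨(starRingEnd ℂ) z / (‖z‖ : ℂ), ?_, ?_⟩
        · rw [norm_div, Complex.norm_conj, Complex.norm_real,
            norm_norm, div_self (norm_ne_zero_iff.mpr h0)]
        · rw [div_mul_eq_mul_div, mul_comm, Complex.mul_conj, Complex.normSq_eq_norm_sq]
          push_cast
          rw [sq, mul_div_assoc, div_self, mul_one]
          exact_mod_cast norm_ne_zero_iff.mpr h0
    set x' : Fin n → ℂ := (starRingEnd ℂ) c0 • x with hx'def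
    have hzx' : sesq (M.map Complex.ofReal) x' y = (‖z‖ : ℂ) := by
      rw [hx'def, sesq_smul_left, ← hzdef, hc0z]
    set a := fun i => (x' i).re
    set b := fun i => (x' i).im
    set c := fun i => (y i).re
    set d := fun i => (y i).im
    have key : ‖z‖ = a ⬝ᵥ (M *ᵥ c) + b ⬝ᵥ (M *ᵥ d) := by
      have := sesq_re M x' y
      rw [hzx'] at this
      simpa using this
    have h1 := h a c
    have h2 := h b d
    rw [← hM] at h1 h2
    have hWx : (sesq (W.map Complex.ofReal) x x).re =
        a ⬝ᵥ (rsym W *ᵥ a) + b ⬝ᵥ (rsym W *ᵥ b) := by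
      rw [← sesq_smul (W.map Complex.ofReal) c0 x hc0, ← hx'def, sesq_re,
        dot_rsym, dot_rsym]
    have hWy : (sesq (W.map Complex.ofReal) y y).re =
        c ⬝ᵥ (rsym W *ᵥ c) + d ⬝ᵥ (rsym W *ᵥ d) := by
      rw [sesq_re, dot_rsym, dot_rsym]
    have hvx : vnormSq x = a ⬝ᵥ a + b ⬝ᵥ b := by
      rw [← vnormSq_smul c0 x hc0, ← hx'def, vnormSq_eq]
    have hvy : vnormSq y = c ⬝ᵥ c + d ⬝ᵥ d := vnormSq_eq y
    rw [Complex.add_re, hWx, hWy, hvx, hvy, key]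
    have e1 := le_abs_self (a ⬝ᵥ (M *ᵥ c))
    have e2 := le_abs_self (b ⬝ᵥ (M *ᵥ d))
    linarith
  · intro h x y
    have := h (fun i => (x i : ℂ)) (fun i => (y i : ℂ))
    rw [hmap, sesq_ofReal, Complex.norm_real, Real.norm_eq_abs] at this
    have hvx : vnormSq (fun i => (x i : ℂ)) = x ⬝ᵥ x := by
      simp [vnormSq, dotProduct, Complex.normSq_ofReal, sq]
    have hvy : vnormSq (fun i => (y i : ℂ)) = y ⬝ᵥ y := by
      simp [vnormSq, dotProduct, Complex.normSq_ofReal, sq]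
    have hWx : (sesq (W.map Complex.ofReal) (fun i => (x i : ℂ)) (fun i => (x i : ℂ))).re
        = x ⬝ᵥ (rsym W *ᵥ x) := by
      rw [sesq_ofReal, Complex.ofReal_re, dot_rsym]
    have hWy : (sesq (W.map Complex.ofReal) (fun i => (y i : ℂ)) (fun i => (y i : ℂ))).re
        = y ⬝ᵥ (rsym W *ᵥ y) := by
      rw [sesq_ofReal, Complex.ofReal_re, dot_rsym]
    rw [Complex.add_re, hvx, hvy, hWx, hWy] at this
    linarith

end
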